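/- Let X and Y be real random variables on a probability space (S, 𝒜, P) with −M ≤ X ≤ Y ≤ M almost surely. Then E[XY] = M² − M·E[Y] + M·E[X] − ∫_{-M}^{M} ∫_{-M}^{t_2} P(t_1 ≤ X and Y ≤ t_2) dt_1 dt_2. -/

import Mathlib

open MeasureTheory

private lemma toReal_ofReal_eq_max (x : ℝ) : (ENNReal.ofReal x).toReal = max 0 x := by
  rcases le_or_gt x 0 with h|h
  · simp [ENNReal.ofReal_of_nonpos h, max_eq_left h]
  · rw [ENNReal.toReal_ofReal h.le, max_eq_right h.le]

/-- If `−M ≤ X ≤ Y ≤ M` a.s. then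
`E[XY] = M² − M·E[Y] + M·E[X] − ∫_{-M}^{M} ∫_{-M}^{t₂} P(t₁ ≤ X ∧ Y ≤ t₂) dt₁ dt₂`. -/
theorem integral_mul_eq_double_integral
    {S : Type*} [MeasurableSpace S] (P : Measure S) [IsProbabilityMeasure P]
    (M : ℝ) (hM : 0 < M) (X Y : S → ℝ) (hX : Measurable X) (hY : Measurable Y)
    (hbdd : ∀ᵐ s ∂P, -M ≤ X s ∧ X s ≤ Y s ∧ Y s ≤ M) :
    ∫ s, X s * Y s ∂P
      = M ^ 2 - M * (∫ s, Y s ∂P) + M * (∫ s, X s ∂P)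
        - ∫ t2 in (-M)..M, ∫ t1 in (-M)..t2, (P {s | t1 ≤ X s ∧ Y s ≤ t2}).toReal := by
  have hMM : -M ≤ M := by linarith
  -- the auxiliary function appearing after computing the inner integral
  set g : ℝ → S → ℝ :=
    fun t2 s => ({s' | Y s' ≤ t2}).indicator (fun s' => max 0 (min t2 (X s') + M)) s with hg
  -- Step 1: the inner integral
  have inner : ∀ t2 : ℝ, -M ≤ t2 →
      (∫ t1 in (-M)..t2, (P {s | t1 ≤ X s ∧ Y s ≤ t2}).toReal) = ∫ s, g t2 s ∂P := by
    intro t2 ht2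
    rw [intervalIntegral.integral_of_le ht2]
    have hmeasA : ∀ t1 : ℝ, MeasurableSet {s | t1 ≤ X s ∧ Y s ≤ t2} := fun t1 =>
      (measurableSet_le measurable_const hX).inter (measurableSet_le hY measurable_const)
    have h1 : ∀ t1 : ℝ, (P {s | t1 ≤ X s ∧ Y s ≤ t2}).toReal
        = ∫ s, ({s | t1 ≤ X s ∧ Y s ≤ t2}).indicator (1 : S → ℝ) s ∂P := fun t1 =>
      (integral_indicator_one (hmeasA t1)).symm
    simp_rw [h1]
    have hmeasP : MeasurableSet {p : ℝ × S | p.1 ≤ X p.2 ∧ Y p.2 ≤ t2} :=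
      (measurableSet_le measurable_fst (hX.comp measurable_snd)).inter
        (measurableSet_le (hY.comp measurable_snd) measurable_const)
    have huncurry : Function.uncurry
        (fun t1 s => ({s' | t1 ≤ X s' ∧ Y s' ≤ t2}).indicator (1 : S → ℝ) s)
        = ({p : ℝ × S | p.1 ≤ X p.2 ∧ Y p.2 ≤ t2}).indicator (1 : ℝ × S → ℝ) := by
      funext p
      simp [Function.uncurry, Set.indicator_apply]
    have hint : Integrable (Function.uncurry
        (fun t1 s => ({s' | t1 ≤ X s' ∧ Y s' ≤ t2}).indicator (1 : S → ℝ) s))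
        (((volume : Measure ℝ).restrict (Set.Ioc (-M) t2)).prod P) := by
      rw [huncurry]
      refine ⟨(measurable_const.indicator hmeasP).aestronglyMeasurable,
        HasFiniteIntegral.of_bounded (C := 1) (ae_of_all _ fun p => ?_)⟩
      rw [Set.indicator_apply]
      split <;> simp
    rw [integral_integral_swap hint]
    refine integral_congr_ae (ae_of_all _ fun s => ?_)
    by_cases hYs : Y s ≤ t2
    · have heq : ∀ t1 : ℝ, ({s' | t1 ≤ X s' ∧ Y s' ≤ t2}).indicator (1 : S → ℝ) s
          = (Set.Iic (X s)).indicator (1 : ℝ → ℝ) t1 := by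
        intro t1
        simp [Set.indicator_apply, hYs]
      simp_rw [heq]
      rw [integral_indicator measurableSet_Iic,
        Measure.restrict_restrict measurableSet_Iic]
      have hset : Set.Iic (X s) ∩ Set.Ioc (-M) t2 = Set.Ioc (-M) (min t2 (X s)) := by
        rw [Set.inter_comm, Set.Ioc_inter_Iic]
      rw [hset]
      simp only [Pi.one_apply]
      rw [setIntegral_const, Measure.real, Real.volume_Ioc, toReal_ofReal_eq_max, smul_eq_mul, mul_one]
      simp only [hg, Set.indicator_of_mem (show s ∈ {s' | Y s' ≤ t2} from hYs)]
      rw [sub_neg_eq_add]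
    · have heq : ∀ t1 : ℝ, ({s' | t1 ≤ X s' ∧ Y s' ≤ t2}).indicator (1 : S → ℝ) s = 0 := by
        intro t1
        simp [Set.indicator_apply, hYs]
      simp_rw [heq]
      simp only [hg, Set.indicator_of_notMem (show s ∉ {s' | Y s' ≤ t2} from hYs)]
      simp
  -- Step 2: the double integral equals `∫ (X + M)(M − Y)`
  have outer : (∫ t2 in (-M)..M, ∫ t1 in (-M)..t2, (P {s | t1 ≤ X s ∧ Y s ≤ t2}).toReal)
      = ∫ s, (X s + M) * (M - Y s) ∂P := by
    have hcongr : (∫ t2 in (-M)..M, ∫ t1 in (-M)..t2, (P {s | t1 ≤ X s ∧ Y s ≤ t2}).toReal)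
        = ∫ t2 in (-M)..M, ∫ s, g t2 s ∂P := by
      refine intervalIntegral.integral_congr fun t2 ht2 => ?_
      rw [Set.uIcc_of_le hMM] at ht2
      exact inner t2 ht2.1
    rw [hcongr, intervalIntegral.integral_of_le hMM]
    have huncurry : Function.uncurry g
        = ({p : ℝ × S | Y p.2 ≤ p.1}).indicator
            (fun p : ℝ × S => max 0 (min p.1 (X p.2) + M)) := by
      funext p
      simp [Function.uncurry, hg, Set.indicator_apply]
    have hint : Integrable (Function.uncurry g)
        (((volume : Measure ℝ).restrict (Set.Ioc (-M) M)).prod P) := by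
      rw [huncurry]
      have hmeasP : MeasurableSet {p : ℝ × S | Y p.2 ≤ p.1} :=
        measurableSet_le (hY.comp measurable_snd) measurable_fst
      have hmf : Measurable fun p : ℝ × S => max 0 (min p.1 (X p.2) + M) :=
        measurable_const.max ((measurable_fst.min (hX.comp measurable_snd)).add_const M)
      refine ⟨(hmf.indicator hmeasP).aestronglyMeasurable,
        HasFiniteIntegral.of_bounded (C := 2 * M) ?_⟩
      have hfst : ∀ᵐ p : ℝ × S ∂(((volume : Measure ℝ).restrict (Set.Ioc (-M) M)).prod P),
          p.1 ∈ Set.Ioc (-M) M :=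
        Measure.quasiMeasurePreserving_fst.ae (ae_restrict_mem measurableSet_Ioc)
      refine hfst.mono fun p hp => ?_
      rw [Set.indicator_apply]
      split
      · rw [Real.norm_of_nonneg (le_max_left _ _)]
        have h1 : min p.1 (X p.2) + M ≤ 2 * M := by
          have := min_le_left p.1 (X p.2); have := hp.2; linarith
        exact max_le (by linarith) h1
      · simp; linarith
    rw [integral_integral_swap hint]
    refine integral_congr_ae (hbdd.mono fun s hs => ?_)
    obtain ⟨h1, h2, h3⟩ := hs
    have heq : ∀ t2 : ℝ, g t2 s = (Set.Ici (Y s)).indicator (fun _ => X s + M) t2 := by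
      intro t2
      simp only [hg, Set.indicator_apply, Set.mem_setOf_eq, Set.mem_Ici]
      by_cases hYs : Y s ≤ t2
      · rw [if_pos hYs, if_pos hYs, min_eq_right (by linarith), max_eq_right (by linarith)]
      · rw [if_neg hYs, if_neg hYs]
    simp_rw [heq]
    rw [integral_indicator measurableSet_Ici,
      Measure.restrict_restrict measurableSet_Ici, setIntegral_const]
    have hvol : (volume (Set.Ici (Y s) ∩ Set.Ioc (-M) M)).toReal = M - Y s := by
      have hYM : -M ≤ Y s := by linarith
      rcases eq_or_lt_of_le hYM with h|h
      · have hset : Set.Ici (Y s) ∩ Set.Ioc (-M) M = Set.Ioc (-M) M := by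
          refine Set.inter_eq_right.mpr fun t ht => ?_
          exact le_of_lt (h ▸ ht.1)
        rw [hset, Real.volume_Ioc, ENNReal.toReal_ofReal (by linarith)]
        linarith
      · have hset : Set.Ici (Y s) ∩ Set.Ioc (-M) M = Set.Icc (Y s) M := by
          ext t
          simp only [Set.mem_inter_iff, Set.mem_Ici, Set.mem_Ioc, Set.mem_Icc]
          exact ⟨fun ⟨ha, _, hc⟩ => ⟨ha, hc⟩, fun ⟨ha, hc⟩ => ⟨ha, lt_of_lt_of_le h ha, hc⟩⟩
        rw [hset, Real.volume_Icc, ENNReal.toReal_ofReal (by linarith)]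
    rw [Measure.real, hvol, smul_eq_mul, mul_comm]
  -- Step 3: integrability and algebra
  have hIX : Integrable X P :=
    ⟨hX.aestronglyMeasurable, HasFiniteIntegral.of_bounded (C := M)
      (hbdd.mono fun s hs => by
        rw [Real.norm_eq_abs, abs_le]; exact ⟨hs.1, by linarith [hs.2.1, hs.2.2]⟩)⟩
  have hIY : Integrable Y P :=
    ⟨hY.aestronglyMeasurable, HasFiniteIntegral.of_bounded (C := M)
      (hbdd.mono fun s hs => by
        rw [Real.norm_eq_abs, abs_le]; exact ⟨by linarith [hs.1, hs.2.1], hs.2.2⟩)⟩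
  have hIXY : Integrable (fun s => X s * Y s) P :=
    ⟨(hX.mul hY).aestronglyMeasurable, HasFiniteIntegral.of_bounded (C := M * M)
      (hbdd.mono fun s hs => by
        obtain ⟨h1, h2, h3⟩ := hs
        rw [Real.norm_eq_abs, abs_mul]
        have hx : |X s| ≤ M := abs_le.mpr ⟨h1, by linarith⟩
        have hy : |Y s| ≤ M := abs_le.mpr ⟨by linarith, h3⟩
        exact mul_le_mul hx hy (abs_nonneg _) (by linarith))⟩
  have hfinal : ∫ s, (X s + M) * (M - Y s) ∂P
      = M * (∫ s, X s ∂P) - (∫ s, X s * Y s ∂P) + M ^ 2 - M * ∫ s, Y s ∂P := by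
    have hring : (fun s => (X s + M) * (M - Y s))
        = fun s => (M * X s - X s * Y s) + (M ^ 2 - M * Y s) := by funext s; ring
    have ha : Integrable (fun s => M * X s - X s * Y s) P := (hIX.const_mul M).sub hIXY
    have hb : Integrable (fun s : S => M ^ 2 - M * Y s) P :=
      (integrable_const (M ^ 2)).sub (hIY.const_mul M)
    have hc : Integrable (fun s => M * X s) P := hIX.const_mul M
    have hd : Integrable (fun s => M * Y s) P := hIY.const_mul M
    rw [hring, integral_add ha hb, integral_sub hc hIXY,
      integral_sub (integrable_const (M ^ 2)) hd,
      integral_const_mul, integral_const_mul, integral_const]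
    simp [measure_univ]
    ring
  rw [outer, hfinal]
  ring
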